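/- Let 𝔤 be an m-dimensional Lie algebra over an infinite field 𝔽 such that there exist two elements x₀, y₀ ∈ 𝔤 that generate 𝔤 as a Lie algebra. Then there are elements xᵢ, yᵢ ∈ 𝔤 for i = 1, …, m² such that for every i, the pair xᵢ and yᵢ generates 𝔤 as a Lie algebra, and the elements xᵢ ⊗ yᵢ span the tensor product 𝔤 ⊗ 𝔤. -/

import Mathlib

open TensorProduct

/-- Abstract bracket words in two letters. -/
inductive LieWord : Type
  | X : LieWord
  | Y : LieWord
  | br : LieWord → LieWord → LieWord

namespace LieWord

variable {𝔽 : Type*} [Field 𝔽] {𝔤 : Type*} [LieRing 𝔤] [LieAlgebra 𝔽 𝔤]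

/-- Evaluation of a word at a pair of elements. -/
def ev (u v : 𝔤) : LieWord → 𝔤
  | .X => u
  | .Y => v
  | .br a b => ⁅a.ev u v, b.ev u v⁆

theorem ev_mem_lieSpan (u v : 𝔤) (w : LieWord) :
    w.ev u v ∈ LieSubalgebra.lieSpan 𝔽 𝔤 {u, v} := by
  induction w with
  | X => exact LieSubalgebra.subset_lieSpan (by left; rfl)
  | Y => exact LieSubalgebra.subset_lieSpan (by right; rfl)
  | br a b ha hb => exact LieSubalgebra.lie_mem _ ha hb

/-- The span of all word values is a Lie subalgebra. -/
noncomputable def wordSpan (u v : 𝔤) : LieSubalgebra 𝔽 𝔤 :=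
  { Submodule.span 𝔽 (Set.range (ev u v)) with
    lie_mem' := by
      intro x y hx hy
      induction hx using Submodule.span_induction with
      | mem x hx =>
        induction hy using Submodule.span_induction with
        | mem y hy =>
          obtain ⟨a, rfl⟩ := hx
          obtain ⟨b, rfl⟩ := hy
          exact Submodule.subset_span ⟨.br a b, rfl⟩
        | zero => simp
        | add y z _ _ hy hz => rw [lie_add]; exact Submodule.add_mem _ hy hz
        | smul t y _ hy => rw [lie_smul]; exact Submodule.smul_mem _ _ hy
      | zero => simp
      | add x z _ _ hx hz => rw [add_lie]; exact Submodule.add_mem _ hx hz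
      | smul t x _ hx => rw [smul_lie]; exact Submodule.smul_mem _ _ hx }

theorem span_range_ev_eq_top (u v : 𝔤)
    (h : LieSubalgebra.lieSpan 𝔽 𝔤 {u, v} = ⊤) :
    Submodule.span 𝔽 (Set.range (ev u v)) = ⊤ := by
  have h1 : LieSubalgebra.lieSpan 𝔽 𝔤 {u, v} ≤ wordSpan u v := by
    apply LieSubalgebra.lieSpan_le.mpr
    rintro z (rfl | rfl)
    · exact Submodule.subset_span ⟨.X, rfl⟩
    · exact Submodule.subset_span ⟨.Y, rfl⟩
  rw [h] at h1
  exact top_le_iff.mp h1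

theorem lieSpan_eq_top_of_span (u v : 𝔤) {s : Set LieWord}
    (h : Submodule.span 𝔽 ((ev u v) '' s) = ⊤) :
    LieSubalgebra.lieSpan 𝔽 𝔤 {u, v} = ⊤ := by
  rw [eq_top_iff]
  intro z _
  have hz : z ∈ Submodule.span 𝔽 ((ev u v) '' s) := h ▸ Submodule.mem_top
  refine Submodule.span_induction ?_ ?_ ?_ ?_ hz
  · rintro x ⟨w, -, rfl⟩; exact ev_mem_lieSpan u v w
  · exact Submodule.zero_mem _
  · intro x y _ _ hx hy; exact add_mem hx hy
  · intro t x _ hx; exact Submodule.smul_mem _ _ hx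

end LieWord

namespace LieWord

variable {𝔽 : Type*} [Field 𝔽] {𝔤 : Type*} [LieRing 𝔤] [LieAlgebra 𝔽 𝔤]

/-- The `j`-th coordinate of the value of a word, as a polynomial in the coordinates
of the two arguments. -/
noncomputable def poly {m : ℕ} (b : Module.Basis (Fin m) 𝔽 𝔤) :
    LieWord → Fin m → MvPolynomial (Fin m ⊕ Fin m) 𝔽
  | .X, j => MvPolynomial.X (.inl j)
  | .Y, j => MvPolynomial.X (.inr j)
  | .br a d, j => ∑ p, ∑ q, a.poly b p * d.poly b q * MvPolynomial.C (b.repr ⁅b p, b q⁆ j)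

theorem repr_sum (m : ℕ) (b : Module.Basis (Fin m) 𝔽 𝔤) (f : Fin m → 𝔽) (j : Fin m) :
    b.repr (∑ i, f i • b i) j = f j := by
  classical
  simp only [map_sum, map_smul, Finsupp.coe_finset_sum, Finset.sum_apply, Finsupp.smul_apply,
    Module.Basis.repr_self, Finsupp.single_apply, smul_eq_mul, mul_ite, mul_one, mul_zero]
  simp [Finset.sum_ite_eq, Finset.sum_ite_eq']

theorem sum_lie' {ι : Type*} (s : Finset ι) (f : ι → 𝔤) (z : 𝔤) :
    ⁅∑ i ∈ s, f i, z⁆ = ∑ i ∈ s, ⁅f i, z⁆ := by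
  induction s using Finset.cons_induction with
  | empty => simp
  | cons a s ha ih => simp [Finset.sum_cons, add_lie, ih]

theorem lie_sum' {ι : Type*} (s : Finset ι) (f : ι → 𝔤) (z : 𝔤) :
    ⁅z, ∑ i ∈ s, f i⁆ = ∑ i ∈ s, ⁅z, f i⁆ := by
  induction s using Finset.cons_induction with
  | empty => simp
  | cons a s ha ih => simp [Finset.sum_cons, lie_add, ih]

theorem eval_poly {m : ℕ} (b : Module.Basis (Fin m) 𝔽 𝔤) (c : Fin m ⊕ Fin m → 𝔽)
    (w : LieWord) (j : Fin m) :
    MvPolynomial.eval c (w.poly b j)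
      = b.repr (w.ev (∑ i, c (.inl i) • b i) (∑ i, c (.inr i) • b i)) j := by
  induction w generalizing j with
  | X => simp only [poly, MvPolynomial.eval_X, ev, repr_sum]
  | Y => simp only [poly, MvPolynomial.eval_X, ev, repr_sum]
  | br a d ha hd =>
    have key : ∀ z z' : 𝔤, b.repr ⁅z, z'⁆ j
        = ∑ p, ∑ q, (b.repr z p) * (b.repr z' q) * b.repr ⁅b p, b q⁆ j := by
      intro z z'
      conv_lhs => rw [← b.sum_repr z, ← b.sum_repr z']
      rw [sum_lie']
      rw [map_sum, Finsupp.finset_sum_apply]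
      refine Finset.sum_congr rfl fun p _ => ?_
      rw [lie_sum', map_sum, Finsupp.finset_sum_apply]
      refine Finset.sum_congr rfl fun q _ => ?_
      rw [smul_lie, lie_smul, smul_smul, map_smul]
      simp [mul_assoc]
    rw [ev, key, poly]
    simp only [map_sum, map_mul, MvPolynomial.eval_C, ha, hd]

end LieWord

section Main

variable {𝔽 : Type*} [Field 𝔽] [Infinite 𝔽] {𝔤 : Type*} [LieRing 𝔤] [LieAlgebra 𝔽 𝔤]
  [Module.Finite 𝔽 𝔤]

/-- The tensors `u ⊗ v` over all generating pairs `(u, v)` span `𝔤 ⊗ 𝔤`. -/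
theorem span_generating_tensors (x₀ y₀ : 𝔤)
    (hgen : LieSubalgebra.lieSpan 𝔽 𝔤 {x₀, y₀} = ⊤) :
    Submodule.span 𝔽 {z : 𝔤 ⊗[𝔽] 𝔤 |
      ∃ u v : 𝔤, LieSubalgebra.lieSpan 𝔽 𝔤 {u, v} = ⊤ ∧ z = u ⊗ₜ[𝔽] v} = ⊤ := by
  classical
  set S : Set (𝔤 ⊗[𝔽] 𝔤) :=
    {z : 𝔤 ⊗[𝔽] 𝔤 | ∃ u v : 𝔤, LieSubalgebra.lieSpan 𝔽 𝔤 {u, v} = ⊤ ∧ z = u ⊗ₜ[𝔽] v} with hS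
  set m := Module.finrank 𝔽 𝔤 with hm
  let b : Module.Basis (Fin m) 𝔽 𝔤 := Module.finBasis 𝔽 𝔤
  -- pick words forming a basis at the base point
  have hspan0 : Submodule.span 𝔽 (Set.range (LieWord.ev x₀ y₀)) = ⊤ :=
    LieWord.span_range_ev_eq_top x₀ y₀ hgen
  obtain ⟨s, hs_sub, hs_span, hs_ind⟩ :=
    exists_linearIndependent 𝔽 (Set.range (LieWord.ev x₀ y₀))
  rw [hspan0] at hs_span
  have hsfin : s.Finite := hs_ind.setFinite
  haveI := hsfin.fintype
  let c : Module.Basis s 𝔽 𝔤 := Module.Basis.mk hs_ind (by rw [Subtype.range_coe, hs_span])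
  have hcard : Fintype.card s = m := (Module.finrank_eq_card_basis c).symm
  let e : Fin m ≃ s := (Fintype.equivFinOfCardEq hcard).symm
  have hw' : ∀ i : Fin m, ∃ w : LieWord, LieWord.ev x₀ y₀ w = (e i : 𝔤) :=
    fun i => hs_sub (e i).2
  choose w hw using hw'
  -- the determinant polynomial
  let D : MvPolynomial (Fin m ⊕ Fin m) 𝔽 :=
    (Matrix.of fun i j : Fin m => (w i).poly b j).det
  have hevalD : ∀ cc : Fin m ⊕ Fin m → 𝔽, MvPolynomial.eval cc D =
      b.det (fun i => (w i).ev (∑ i, cc (.inl i) • b i) (∑ i, cc (.inr i) • b i)) := by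
    intro cc
    rw [show MvPolynomial.eval cc D
        = ((Matrix.of fun i j : Fin m => (w i).poly b j).map (MvPolynomial.eval cc)).det from
      (RingHom.map_det (MvPolynomial.eval cc) _)]
    rw [Module.Basis.det_apply, ← Matrix.det_transpose (b.toMatrix _)]
    congr 1
    ext i j
    simp only [Matrix.map_apply, Matrix.of_apply, Matrix.transpose_apply, Module.Basis.toMatrix_apply]
    exact LieWord.eval_poly b cc (w i) j
  -- it is nonzero at the base point, hence nonzero
  have hbase : IsUnit (b.det fun i => LieWord.ev x₀ y₀ (w i)) := by
    have hcer : (fun i => LieWord.ev x₀ y₀ (w i)) = ⇑(c.reindex e.symm) := by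
      funext i
      rw [hw i, Module.Basis.reindex_apply, Equiv.symm_symm, Module.Basis.coe_mk]
    rw [hcer]
    exact b.isUnit_det _
  have hDne : D ≠ 0 := by
    intro h
    let cc₀ : Fin m ⊕ Fin m → 𝔽 := Sum.elim (fun i => b.repr x₀ i) (fun i => b.repr y₀ i)
    have h1 := hevalD cc₀
    rw [h, map_zero] at h1
    have h2 : (∑ i, cc₀ (.inl i) • b i) = x₀ := b.sum_repr x₀
    have h3 : (∑ i, cc₀ (.inr i) • b i) = y₀ := b.sum_repr y₀
    rw [h2, h3] at h1
    exact (h1 ▸ hbase).ne_zero rfl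
  -- points where D is nonzero give generating pairs
  have hgen' : ∀ cc : Fin m ⊕ Fin m → 𝔽, MvPolynomial.eval cc D ≠ 0 →
      LieSubalgebra.lieSpan 𝔽 𝔤 {∑ i, cc (.inl i) • b i, ∑ i, cc (.inr i) • b i} = ⊤ := by
    intro cc hcc
    rw [hevalD cc] at hcc
    obtain ⟨-, hspan⟩ := (Module.Basis.is_basis_iff_det b).mpr (isUnit_iff_ne_zero.mpr hcc)
    refine LieWord.lieSpan_eq_top_of_span _ _ (s := Set.range w) ?_
    rw [← hspan]
    congr 1
    rw [← Set.range_comp]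
    rfl
  -- now the duality argument
  by_contra hne
  obtain ⟨φ, hφne, hφbot⟩ :=
    Submodule.exists_dual_map_eq_bot_of_lt_top (lt_top_iff_ne_top.mpr hne) inferInstance
  have hφ0 : ∀ z ∈ S, φ z = 0 := by
    intro z hz
    have : φ z ∈ Submodule.map φ (Submodule.span 𝔽 S) :=
      Submodule.mem_map_of_mem (Submodule.subset_span hz)
    rwa [hφbot, Submodule.mem_bot] at this
  let Q : MvPolynomial (Fin m ⊕ Fin m) 𝔽 :=
    ∑ p, ∑ q, MvPolynomial.X (.inl p) * MvPolynomial.X (.inr q)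
      * MvPolynomial.C (φ (b p ⊗ₜ[𝔽] b q))
  have hevalQ : ∀ cc : Fin m ⊕ Fin m → 𝔽, MvPolynomial.eval cc Q =
      φ ((∑ i, cc (.inl i) • b i) ⊗ₜ[𝔽] (∑ i, cc (.inr i) • b i)) := by
    intro cc
    rw [TensorProduct.sum_tmul, map_sum, map_sum]
    refine Finset.sum_congr rfl fun p _ => ?_
    rw [TensorProduct.tmul_sum, map_sum, map_sum]
    refine Finset.sum_congr rfl fun q _ => ?_
    have : (cc (Sum.inl p) • b p) ⊗ₜ[𝔽] (cc (Sum.inr q) • b q)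
        = (cc (Sum.inl p) * cc (Sum.inr q)) • (b p ⊗ₜ[𝔽] b q) := by
      rw [smul_tmul', TensorProduct.tmul_smul, smul_tmul', smul_smul, mul_comm (cc (Sum.inr q))]
    rw [this, map_smul]
    simp [mul_assoc]
  have hQD : Q * D = 0 := by
    apply MvPolynomial.funext (q := 0)
    intro cc
    rw [map_zero, map_mul]
    by_cases h : MvPolynomial.eval cc D = 0
    · rw [h, mul_zero]
    · rw [hevalQ cc, hφ0 _ ⟨_, _, hgen' cc h, rfl⟩, zero_mul]
  have hQ : Q = 0 := by
    rcases mul_eq_zero.mp hQD with h | h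
    · exact h
    · exact absurd h hDne
  have hφb : ∀ p q : Fin m, φ (b p ⊗ₜ[𝔽] b q) = 0 := by
    intro p q
    let cc : Fin m ⊕ Fin m → 𝔽 :=
      Sum.elim (fun i => if i = p then 1 else 0) (fun i => if i = q then 1 else 0)
    have h1 := hevalQ cc
    rw [hQ, map_zero] at h1
    have h2 : (∑ i, cc (.inl i) • b i) = b p := by
      simp [cc, ite_smul, Finset.sum_ite_eq']
    have h3 : (∑ i, cc (.inr i) • b i) = b q := by
      simp [cc, ite_smul, Finset.sum_ite_eq']
    rw [h2, h3] at h1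
    exact h1.symm
  have : φ = 0 := by
    apply (b.tensorProduct b).ext
    rintro ⟨p, q⟩
    rw [Module.Basis.tensorProduct_apply]
    simpa using hφb p q
  exact hφne this

end Main

/-- In an `m`-dimensional Lie algebra over an infinite field which is generated by two elements,
there are `m²` generating pairs `(xᵢ, yᵢ)` such that the `xᵢ ⊗ yᵢ` span `𝔤 ⊗ 𝔤`. -/
theorem generating_pairs_span_tensor {𝔽 : Type*} [Field 𝔽] [Infinite 𝔽]
    {𝔤 : Type*} [LieRing 𝔤] [LieAlgebra 𝔽 𝔤] [Module.Finite 𝔽 𝔤]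
    (x₀ y₀ : 𝔤) (hgen : LieSubalgebra.lieSpan 𝔽 𝔤 {x₀, y₀} = ⊤) :
    ∃ x y : Fin ((Module.finrank 𝔽 𝔤) ^ 2) → 𝔤,
      (∀ i, LieSubalgebra.lieSpan 𝔽 𝔤 {x i, y i} = ⊤) ∧
      Submodule.span 𝔽 (Set.range fun i => x i ⊗ₜ[𝔽] y i) =
        (⊤ : Submodule 𝔽 (𝔤 ⊗[𝔽] 𝔤)) := by
  classical
  set S : Set (𝔤 ⊗[𝔽] 𝔤) :=
    {z : 𝔤 ⊗[𝔽] 𝔤 | ∃ u v : 𝔤, LieSubalgebra.lieSpan 𝔽 𝔤 {u, v} = ⊤ ∧ z = u ⊗ₜ[𝔽] v} with hS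
  have hspanS : Submodule.span 𝔽 S = ⊤ := span_generating_tensors x₀ y₀ hgen
  obtain ⟨t, ht_sub, ht_span, ht_ind⟩ := exists_linearIndependent 𝔽 S
  rw [hspanS] at ht_span
  have htfin : t.Finite := ht_ind.setFinite
  haveI := htfin.fintype
  let ct : Module.Basis t 𝔽 (𝔤 ⊗[𝔽] 𝔤) := Module.Basis.mk ht_ind (by rw [Subtype.range_coe, ht_span])
  have hcard : Fintype.card t = (Module.finrank 𝔽 𝔤) ^ 2 := by
    rw [← Module.finrank_eq_card_basis ct, Module.finrank_tensorProduct, sq]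
  let e : Fin ((Module.finrank 𝔽 𝔤) ^ 2) ≃ t := (Fintype.equivFinOfCardEq hcard).symm
  have hmem : ∀ i, ((e i : 𝔤 ⊗[𝔽] 𝔤) ∈ S) := fun i => ht_sub (e i).2
  choose x y hxy hz using hmem
  refine ⟨x, y, hxy, ?_⟩
  have hre : (Set.range fun i => x i ⊗ₜ[𝔽] y i) = t := by
    have h1 : (fun i => x i ⊗ₜ[𝔽] y i) = fun i => ((e i : 𝔤 ⊗[𝔽] 𝔤)) :=
      funext fun i => (hz i).symm
    rw [h1]
    ext z
    simp only [Set.mem_range]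
    constructor
    · rintro ⟨i, rfl⟩; exact (e i).2
    · intro hzt; exact ⟨e.symm ⟨z, hzt⟩, by simp⟩
  rw [hre, ht_span]
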